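/- (Well-definedness of the vector representation.) The eight matrices ρ(K₁) = u·diag(q²,1)⊗D, ρ(L₁) = u·diag(1,q²)⊗D, ρ(E₁) = −u(q²−1)·e₁₂⊗D, ρ(F₁) = e₂₁⊗I_N, ρ(K₀) = v·diag(ω,q²)⊗D⁻¹, ρ(L₀) = v·diag(ωq²,1)⊗D⁻¹, ρ(E₀) = −v(q²−1)·e₂₁⊗D⁻¹C, ρ(F₀) = e₁₂⊗C⁻¹ (with ρ(K_i⁻¹), ρ(L_i⁻¹) the inverse matrices) satisfy all defining relations of U with a = q⁻²ω; hence there is a unique ℂ-algebra homomorphism ρ : U → M_{2N}(ℂ) taking these values on the generators. -/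

import Mathlib

noncomputable section
open scoped TensorProduct
namespace TwoParamQA

/-- The entries of the parameter matrix `Q`. -/
def qm (q a : ℂ) (i j : Fin 2) : ℂ :=
  if i = j then q ^ 2 else if i = 0 then a else q ^ (-4 : ℤ) * a⁻¹

/-- The bicharacter `χ` on `ℤΠ = ℤα₀ ⊕ ℤα₁` with `χ(αᵢ,αⱼ) = q_{ij}`. -/
def chi (q a : ℂ) (l m : ℤ × ℤ) : ℂ :=
  q ^ (2 * l.1 * m.1) * a ^ (l.1 * m.2) * (q ^ (-4 : ℤ) * a⁻¹) ^ (l.2 * m.1) *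
    q ^ (2 * l.2 * m.2)

/-- The `q`-Serre element `X_i³X_j − c_{ij}(3)_{q²} X_i²X_jX_i + q²c_{ij}²(3)_{q²} X_iX_jX_i²
    − q⁶c_{ij}³ X_jX_i³` (with `q_{ii} = q²`). -/
def serreElt (q : ℂ) {A : Type} [Ring A] [Algebra ℂ A] (X : Fin 2 → A)
    (c : Fin 2 → Fin 2 → ℂ) (i j : Fin 2) : A :=
  X i ^ 3 * X j - (c i j * (1 + q ^ 2 + q ^ 4)) • (X i ^ 2 * X j * X i)
    + (q ^ 2 * c i j ^ 2 * (1 + q ^ 2 + q ^ 4)) • (X i * X j * X i ^ 2)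
    - (q ^ 6 * c i j ^ 3) • (X j * X i ^ 3)

/-- Defining relations of the positive part `U⁺`: the two `q`-Serre relations. -/
inductive PRel (q a : ℂ) : FreeAlgebra ℂ (Fin 2) → FreeAlgebra ℂ (Fin 2) → Prop
  | serre (i j : Fin 2) (h : i ≠ j) :
      PRel q a (serreElt q (FreeAlgebra.ι ℂ) (qm q a) i j) 0

/-- The positive part `U⁺` of `U_{q,Q}(\hat{sl₂})`, presented by `E₀, E₁` and the Serre
relations. -/
abbrev Up (q a : ℂ) := RingQuot (PRel q a)

/-- The generators `E₀, E₁` of `U⁺`. -/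
def Ee (q a : ℂ) (i : Fin 2) : Up q a :=
  RingQuot.mkAlgHom ℂ (PRel q a) (FreeAlgebra.ι ℂ i)

variable {A : Type} [Ring A] [Algebra ℂ A]

/-- Graded bracket `⟦X,Y⟧ = XY − χ(λ,μ)YX` for `X` of degree `l` and `Y` of degree `m`. -/
def gbr (χ : ℤ × ℤ → ℤ × ℤ → ℂ) (l m : ℤ × ℤ) (X Y : A) : A :=
  X * Y - χ l m • (Y * X)

/-- `(n)_x = 1 + x + ⋯ + x^{n-1}`. -/
def qnum (x : ℂ) (n : ℕ) : ℂ := ∑ m ∈ Finset.range n, x ^ m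

/-- `[n]_q = q^{-(n-1)}(n)_{q²}`. -/
def qint (q : ℂ) (n : ℕ) : ℂ := q ^ (1 - (n : ℤ)) * qnum (q ^ 2) n

/-- `(n)_x! = (1)_x (2)_x ⋯ (n)_x`. -/
def qfact (x : ℂ) (n : ℕ) : ℂ := ∏ k ∈ Finset.range n, qnum x (k + 1)

/-- Real root vectors `E_{nδ+α₁}` (generic version, for generators `e₀, e₁` and
bicharacter `χ`); `E_{nδ+α₁}` has degree `nδ+α₁ = (n, n+1)`. -/
def ged1 (q : ℂ) (χ : ℤ × ℤ → ℤ × ℤ → ℂ) (e0 e1 : A) : ℕ → A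
  | 0 => e1
  | n + 1 => (qint q 2)⁻¹ •
      gbr χ (1, 1) ((n : ℤ), (n : ℤ) + 1) (gbr χ (1, 0) (0, 1) e0 e1)
        (ged1 q χ e0 e1 n)

/-- Imaginary root vectors `E_{nδ}` (with the convention `E_{0δ} = 1`, unused). -/
def gedl (q : ℂ) (χ : ℤ × ℤ → ℤ × ℤ → ℂ) (e0 e1 : A) : ℕ → A
  | 0 => 1
  | n + 1 => gbr χ (1, 0) ((n : ℤ), (n : ℤ) + 1) e0 (ged1 q χ e0 e1 n)

/-- Real root vectors `E_{nδ+α₀}`, of degree `(n+1, n)`. -/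
def ged0 (q : ℂ) (χ : ℤ × ℤ → ℤ × ℤ → ℂ) (e0 e1 : A) : ℕ → A
  | 0 => e0
  | n + 1 => (qint q 2)⁻¹ •
      gbr χ ((n : ℤ) + 1, (n : ℤ)) (1, 1) (ged0 q χ e0 e1 n)
        (gbr χ (1, 0) (0, 1) e0 e1)

/-- `et` is the family of modified imaginary root vectors `Ẽ_{kδ}` for the imaginary root
vectors `edl`, i.e. it satisfies the defining recursion
`c^{−(k−1)}·k·E_{kδ} = k·Ẽ_{kδ} + (q−q⁻¹)·Σ_{r=1}^{k−1} r·c^{−(k−r−1)}·Ẽ_{rδ}E_{(k−r)δ}`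
(with `c = q²a`), which is equivalent to
`1 + (q−q⁻¹)Σ_{k≥1} c^{−(k−1)}E_{kδ}z^k = exp((q−q⁻¹)Σ_{k≥1}Ẽ_{kδ}z^k)`. -/
def IsTilde (q c : ℂ) (edl et : ℕ → A) : Prop :=
  ∀ k : ℕ, c ^ (-(k : ℤ)) • (((k : ℂ) + 1) • edl (k + 1)) =
    ((k : ℂ) + 1) • et (k + 1) +
      (q - q⁻¹) • ∑ r ∈ Finset.range k,
        (((r : ℂ) + 1) * c ^ (-((k : ℤ) - 1 - (r : ℤ)))) • (et (r + 1) * edl (k - r))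

/-- `E_{nδ+α₁}` in `U⁺`. -/
def E1v (q a : ℂ) : ℕ → Up q a := ged1 q (chi q a) (Ee q a 0) (Ee q a 1)

/-- `E_{nδ}` in `U⁺`. -/
def Edlv (q a : ℂ) : ℕ → Up q a := gedl q (chi q a) (Ee q a 0) (Ee q a 1)

/-- `E_{nδ+α₀}` in `U⁺`. -/
def E0v (q a : ℂ) : ℕ → Up q a := ged0 q (chi q a) (Ee q a 0) (Ee q a 1)


/-- Generators of `U = U_{q,Q}(\hat{sl₂})`: `T b c i` are the torus generators
(`T false false i = Kᵢ`, `T false true i = Kᵢ⁻¹`, `T true false i = Lᵢ`,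
`T true true i = Lᵢ⁻¹`), together with `Eᵢ` and `Fᵢ`. -/
inductive Gen where
  | T : Bool → Bool → Fin 2 → Gen
  | E : Fin 2 → Gen
  | F : Fin 2 → Gen

/-- Defining relations of `U_{q,Q}(\hat{sl₂})`. -/
inductive URel (q a : ℂ) : FreeAlgebra ℂ Gen → FreeAlgebra ℂ Gen → Prop
  | torusComm (b c b' c' : Bool) (i i' : Fin 2) :
      URel q a (FreeAlgebra.ι ℂ (Gen.T b c i) * FreeAlgebra.ι ℂ (Gen.T b' c' i'))
        (FreeAlgebra.ι ℂ (Gen.T b' c' i') * FreeAlgebra.ι ℂ (Gen.T b c i))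
  | torusInv (b : Bool) (i : Fin 2) :
      URel q a (FreeAlgebra.ι ℂ (Gen.T b false i) * FreeAlgebra.ι ℂ (Gen.T b true i)) 1
  | torusInv' (b : Bool) (i : Fin 2) :
      URel q a (FreeAlgebra.ι ℂ (Gen.T b true i) * FreeAlgebra.ι ℂ (Gen.T b false i)) 1
  | KE (i j : Fin 2) :
      URel q a (FreeAlgebra.ι ℂ (Gen.T false false i) * FreeAlgebra.ι ℂ (Gen.E j))
        (qm q a i j • (FreeAlgebra.ι ℂ (Gen.E j) * FreeAlgebra.ι ℂ (Gen.T false false i)))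
  | KF (i j : Fin 2) :
      URel q a (FreeAlgebra.ι ℂ (Gen.T false false i) * FreeAlgebra.ι ℂ (Gen.F j))
        ((qm q a i j)⁻¹ •
          (FreeAlgebra.ι ℂ (Gen.F j) * FreeAlgebra.ι ℂ (Gen.T false false i)))
  | LE (i j : Fin 2) :
      URel q a (FreeAlgebra.ι ℂ (Gen.T true false i) * FreeAlgebra.ι ℂ (Gen.E j))
        ((qm q a j i)⁻¹ •
          (FreeAlgebra.ι ℂ (Gen.E j) * FreeAlgebra.ι ℂ (Gen.T true false i)))
  | LF (i j : Fin 2) :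
      URel q a (FreeAlgebra.ι ℂ (Gen.T true false i) * FreeAlgebra.ι ℂ (Gen.F j))
        (qm q a j i • (FreeAlgebra.ι ℂ (Gen.F j) * FreeAlgebra.ι ℂ (Gen.T true false i)))
  | EF (i j : Fin 2) :
      URel q a (FreeAlgebra.ι ℂ (Gen.E i) * FreeAlgebra.ι ℂ (Gen.F j) -
          FreeAlgebra.ι ℂ (Gen.F j) * FreeAlgebra.ι ℂ (Gen.E i))
        (if i = j then
          -FreeAlgebra.ι ℂ (Gen.T false false i) + FreeAlgebra.ι ℂ (Gen.T true false i)
         else 0)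
  | serreE (i j : Fin 2) (h : i ≠ j) :
      URel q a (serreElt q (fun k => FreeAlgebra.ι ℂ (Gen.E k)) (qm q a) i j) 0
  | serreF (i j : Fin 2) (h : i ≠ j) :
      URel q a (serreElt q (fun k => FreeAlgebra.ι ℂ (Gen.F k)) (fun i j => qm q a j i) i j) 0

/-- The double parameter quantum affine algebra `U = U_{q,Q}(\hat{sl₂})`. -/
abbrev UU (q a : ℂ) := RingQuot (URel q a)

/-- Image of a generator in `U`. -/
def gen (q a : ℂ) (g : Gen) : UU q a := RingQuot.mkAlgHom ℂ (URel q a) (FreeAlgebra.ι ℂ g)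

def Kg (q a : ℂ) (i : Fin 2) : UU q a := gen q a (Gen.T false false i)
def Kinv (q a : ℂ) (i : Fin 2) : UU q a := gen q a (Gen.T false true i)
def Lg (q a : ℂ) (i : Fin 2) : UU q a := gen q a (Gen.T true false i)
def Linv (q a : ℂ) (i : Fin 2) : UU q a := gen q a (Gen.T true true i)
def Ef (q a : ℂ) (i : Fin 2) : UU q a := gen q a (Gen.E i)
def Ff (q a : ℂ) (i : Fin 2) : UU q a := gen q a (Gen.F i)

/-- `K_β = K₀^x K₁^y` for `β = xα₀ + yα₁` with `x, y ≥ 0`. -/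
def KB (q a : ℂ) (x y : ℕ) : UU q a := Kg q a 0 ^ x * Kg q a 1 ^ y

/-- `L_β = L₀^x L₁^y` for `β = xα₀ + yα₁` with `x, y ≥ 0`. -/
def LB (q a : ℂ) (x y : ℕ) : UU q a := Lg q a 0 ^ x * Lg q a 1 ^ y

/-- Positive real root vectors `E_{nδ+α₁}` in `U`. -/
def UE1 (q a : ℂ) : ℕ → UU q a := ged1 q (chi q a) (Ef q a 0) (Ef q a 1)

/-- Positive imaginary root vectors `E_{nδ}` in `U`. -/
def UEdl (q a : ℂ) : ℕ → UU q a := gedl q (chi q a) (Ef q a 0) (Ef q a 1)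

/-- Positive real root vectors `E_{nδ+α₀}` in `U`. -/
def UE0 (q a : ℂ) : ℕ → UU q a := ged0 q (chi q a) (Ef q a 0) (Ef q a 1)

/-- Negative real root vectors `F_{nδ+α₁}` in `U` (their brackets `[·,·]⁻` use
`χ(μ,λ)`, i.e. the opposite bicharacter). -/
def UF1 (q a : ℂ) : ℕ → UU q a := ged1 q (fun l m => chi q a m l) (Ff q a 0) (Ff q a 1)

/-- Negative imaginary root vectors `F_{nδ}` in `U`. -/
def UFdl (q a : ℂ) : ℕ → UU q a := gedl q (fun l m => chi q a m l) (Ff q a 0) (Ff q a 1)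

/-- Negative real root vectors `F_{nδ+α₀}` in `U`. -/
def UF0 (q a : ℂ) : ℕ → UU q a := ged0 q (fun l m => chi q a m l) (Ff q a 0) (Ff q a 1)


open Kronecker

/-- The cyclic permutation matrix `C` of size `N`. -/
def Cmat (N : ℕ) [NeZero N] : Matrix (Fin N) (Fin N) ℂ :=
  Matrix.of fun s t => if t = s + 1 then 1 else 0

/-- The inverse cyclic permutation matrix `C⁻¹`. -/
def Cinv (N : ℕ) [NeZero N] : Matrix (Fin N) (Fin N) ℂ :=
  Matrix.of fun s t => if s = t + 1 then 1 else 0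

/-- `D = diag(1, ω, …, ω^{N−1})`. -/
def Dmat (N : ℕ) (ω : ℂ) : Matrix (Fin N) (Fin N) ℂ :=
  Matrix.diagonal fun s => ω ^ (s : ℕ)

/-- `D⁻¹ = diag(1, ω⁻¹, …, ω^{−(N−1)})`. -/
def Dinv (N : ℕ) (ω : ℂ) : Matrix (Fin N) (Fin N) ℂ :=
  Matrix.diagonal fun s => (ω ^ (s : ℕ))⁻¹

/-- The `2×2` matrix units. -/
def e11 : Matrix (Fin 2) (Fin 2) ℂ := Matrix.single 0 0 1
def e12 : Matrix (Fin 2) (Fin 2) ℂ := Matrix.single 0 1 1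
def e21 : Matrix (Fin 2) (Fin 2) ℂ := Matrix.single 1 0 1
def e22 : Matrix (Fin 2) (Fin 2) ℂ := Matrix.single 1 1 1

/-- `diag(x, y)`. -/
def dg2 (x y : ℂ) : Matrix (Fin 2) (Fin 2) ℂ := Matrix.diagonal ![x, y]


section Aux
open Matrix Kronecker

variable (N : ℕ) [NeZero N] (ω q u v : ℂ)

/-- Diagonal entries of `ρ(Kᵢ)`. -/
def kfun (i : Fin 2) (p : Fin 2 × Fin N) : ℂ :=
  if i = 0 then v * ![ω, q ^ 2] p.1 * (ω ^ (p.2 : ℕ))⁻¹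
  else u * ![q ^ 2, 1] p.1 * ω ^ (p.2 : ℕ)

/-- Diagonal entries of `ρ(Lᵢ)`. -/
def lfun (i : Fin 2) (p : Fin 2 × Fin N) : ℂ :=
  if i = 0 then v * ![ω * q ^ 2, 1] p.1 * (ω ^ (p.2 : ℕ))⁻¹
  else u * ![1, q ^ 2] p.1 * ω ^ (p.2 : ℕ)

def klfun (b : Bool) : Fin 2 → Fin 2 × Fin N → ℂ :=
  if b then lfun N ω q u v else kfun N ω q u v

def tfun (b c : Bool) (i : Fin 2) (p : Fin 2 × Fin N) : ℂ :=
  if c then (klfun N ω q u v b i p)⁻¹ else klfun N ω q u v b i p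

/-- The vector representation on generators. -/
def rep : Gen → Matrix (Fin 2 × Fin N) (Fin 2 × Fin N) ℂ
  | .T b c i => Matrix.diagonal (tfun N ω q u v b c i)
  | .E i => if i = 0 then (-(v * (q ^ 2 - 1))) • (e21 ⊗ₖ (Dinv N ω * Cmat N))
      else (-(u * (q ^ 2 - 1))) • (e12 ⊗ₖ Dmat N ω)
  | .F i => if i = 0 then e12 ⊗ₖ Cinv N else e21 ⊗ₖ (1 : Matrix (Fin N) (Fin N) ℂ)

variable {N ω q u v}

lemma klfun_ne (hq : q ≠ 0) (hω : ω ≠ 0) (hu : u ≠ 0) (hv : v ≠ 0)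
    (b : Bool) (i : Fin 2) (p : Fin 2 × Fin N) : klfun N ω q u v b i p ≠ 0 := by
  obtain ⟨s, t⟩ := p
  have hω' : ω ^ (t : ℕ) ≠ 0 := pow_ne_zero _ hω
  fin_cases b <;> fin_cases i <;> fin_cases s <;>
    simp [klfun, kfun, lfun, hq, hω, hu, hv, hω', pow_ne_zero, inv_ne_zero]

lemma hpow (hω1 : ω ^ N = 1) (t : Fin N) :
    ω ^ (((t + 1 : Fin N)) : ℕ) = ω ^ (t : ℕ) * ω := by
  have h1 : ((1 : Fin N) : ℕ) = 1 % N := rfl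
  have : (((t + 1 : Fin N)) : ℕ) = ((t : ℕ) + 1) % N := by
    rw [Fin.add_def]; simp [h1, Nat.add_mod]
  rw [this, ← pow_eq_pow_mod _ hω1, pow_succ]

lemma DD (hω : ω ≠ 0) : Dmat N ω * Dinv N ω = 1 := by
  rw [Dmat, Dinv, Matrix.diagonal_mul_diagonal]
  ext s t
  by_cases h : s = t <;>
    simp [Matrix.diagonal_apply, Matrix.one_apply, h, mul_inv_cancel₀ (pow_ne_zero _ hω)]

lemma DD' (hω : ω ≠ 0) : Dinv N ω * Dmat N ω = 1 := by
  rw [Dmat, Dinv, Matrix.diagonal_mul_diagonal]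
  ext s t
  by_cases h : s = t <;>
    simp [Matrix.diagonal_apply, Matrix.one_apply, h, inv_mul_cancel₀ (pow_ne_zero _ hω)]

lemma CC : Cmat N * Cinv N = 1 := by
  ext s t
  simp only [Matrix.mul_apply, Cmat, Cinv, Matrix.of_apply, ite_mul, one_mul, zero_mul,
    Finset.sum_ite_eq', Finset.mem_univ, if_true]
  by_cases h : s = t
  · simp [h, Matrix.one_apply]
  · have : ¬ s + 1 = t + 1 := fun hc => h (by
      have := add_right_cancel hc; exact this)
    simp [Matrix.one_apply, h, this]

open Fin.CommRing in
lemma CC' : Cinv N * Cmat N = 1 := by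
  ext s t
  have hs : ∀ k : Fin N, (s = k + 1) = (k = s - 1) := by
    intro k; ext
    constructor
    · intro h; rw [h]; ring
    · intro h; rw [h]; ring
  simp only [Matrix.mul_apply, Cmat, Cinv, Matrix.of_apply, hs, ite_mul, one_mul, zero_mul,
    Finset.sum_ite_eq', Finset.mem_univ, if_true]
  by_cases h : s = t
  · have : t = s - 1 + 1 := by rw [← h]; ring
    simp [h, Matrix.one_apply, ← this]
  · have h2 : ¬ t = s - 1 + 1 := fun hc => h (by rw [hc]; ring)
    have h3 : ¬ t = s := fun hc => h hc.symm
    simp [Matrix.one_apply, h, h2, h3]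

lemma DCC : Dinv N ω * Cmat N * Cinv N = Dinv N ω := by
  rw [mul_assoc, CC, mul_one]

lemma DC (hω1 : ω ^ N = 1) (hω : ω ≠ 0) :
    Dinv N ω * Cmat N = ω • (Cmat N * Dinv N ω) := by
  ext s t
  simp only [Dinv, Cmat, Matrix.diagonal_mul, Matrix.mul_diagonal, Matrix.smul_apply,
    Matrix.of_apply, smul_eq_mul]
  by_cases h : t = s + 1
  · subst h
    have key := hpow hω1 s
    rw [key]
    have h1 : ω ^ (s : ℕ) ≠ 0 := pow_ne_zero _ hω
    field_simp
  · simp [h]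

lemma CDC (hω1 : ω ^ N = 1) (hω : ω ≠ 0) :
    Cinv N * (Dinv N ω * Cmat N) = ω • Dinv N ω := by
  rw [DC hω1 hω, mul_smul_comm, ← mul_assoc, CC', one_mul]

lemma serreElt_eq_zero {A : Type} [Ring A] [Algebra ℂ A] (q : ℂ) (X : Fin 2 → A)
    (c : Fin 2 → Fin 2 → ℂ) (i j : Fin 2) (h : X i ^ 2 = 0) : serreElt q X c i j = 0 := by
  have h3 : X i ^ 3 = 0 := by
    rw [pow_succ, h, zero_mul]
  have h1 : X i * X j * X i ^ 2 = 0 := by rw [h, mul_zero]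
  simp [serreElt, h, h3, h1]

lemma map_serreElt {A B : Type} [Ring A] [Algebra ℂ A] [Ring B] [Algebra ℂ B]
    (f : A →ₐ[ℂ] B) (q : ℂ) (X : Fin 2 → A) (c : Fin 2 → Fin 2 → ℂ) (i j : Fin 2) :
    f (serreElt q X c i j) = serreElt q (fun k => f (X k)) c i j := by
  simp [serreElt, map_sub, map_add, _root_.map_smul, _root_.map_mul, map_pow]

end Aux

section MainProof

open Matrix Kronecker

variable {N : ℕ} [NeZero N] {ω q u v : ℂ}

@[simp] lemma repT (b c : Bool) (i : Fin 2) :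
    rep N ω q u v (.T b c i) = Matrix.diagonal (tfun N ω q u v b c i) := rfl

@[simp] lemma repE0 :
    rep N ω q u v (.E 0) = (-(v * (q ^ 2 - 1))) • (e21 ⊗ₖ (Dinv N ω * Cmat N)) := rfl

@[simp] lemma repE1 :
    rep N ω q u v (.E 1) = (-(u * (q ^ 2 - 1))) • (e12 ⊗ₖ Dmat N ω) := rfl

@[simp] lemma repF0 : rep N ω q u v (.F 0) = e12 ⊗ₖ Cinv N := rfl

@[simp] lemma repF1 : rep N ω q u v (.F 1) = e21 ⊗ₖ (1 : Matrix (Fin N) (Fin N) ℂ) := rfl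

lemma e12_sq : e12 * e12 = 0 := by
  rw [e12, Matrix.single_mul_single_of_ne]
  decide

lemma e21_sq : e21 * e21 = 0 := by
  rw [e21, Matrix.single_mul_single_of_ne]
  decide

lemma repE_sq (i : Fin 2) : rep N ω q u v (.E i) ^ 2 = 0 := by
  fin_cases i <;>
    simp only [Fin.isValue, Fin.mk_zero, Fin.mk_one, repE0, repE1, pow_two, smul_mul_assoc, mul_smul_comm,
      ← Matrix.mul_kronecker_mul]
  · rw [e21_sq, Matrix.zero_kronecker]; simp
  · rw [e12_sq, Matrix.zero_kronecker]; simp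

lemma repF_sq (i : Fin 2) : rep N ω q u v (.F i) ^ 2 = 0 := by
  fin_cases i <;>
    simp only [Fin.isValue, Fin.mk_zero, Fin.mk_one, repF0, repF1, pow_two, ← Matrix.mul_kronecker_mul]
  · rw [e12_sq, Matrix.zero_kronecker]
  · rw [e21_sq, Matrix.zero_kronecker]

section Rels

variable (hω : IsPrimitiveRoot ω N) (hq0 : q ≠ 0) (hu : u ≠ 0) (hv : v ≠ 0)

include hω hq0 hu hv

omit hq0 hu hv in
lemma hω0 : ω ≠ 0 := hω.ne_zero (NeZero.ne N)

omit hq0 hu hv in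
lemma hω1 : ω ^ N = 1 := hω.pow_eq_one

omit hω hq0 hu hv in
lemma relTT (b c b' c' : Bool) (i i' : Fin 2) :
    rep N ω q u v (.T b c i) * rep N ω q u v (.T b' c' i') =
    rep N ω q u v (.T b' c' i') * rep N ω q u v (.T b c i) := by
  simp only [repT, Matrix.diagonal_mul_diagonal]
  ext p p'
  by_cases h : p = p' <;> simp [Matrix.diagonal_apply, h, mul_comm]

lemma relTinv (b : Bool) (i : Fin 2) :
    rep N ω q u v (.T b false i) * rep N ω q u v (.T b true i) = 1 := by
  simp only [repT, Matrix.diagonal_mul_diagonal, tfun, if_true, if_false, Bool.false_eq_true,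
    reduceIte]
  ext p p'
  by_cases h : p = p' <;>
    simp [Matrix.diagonal_apply, Matrix.one_apply, h,
      mul_inv_cancel₀ (klfun_ne hq0 (hω0 hω) hu hv b i p')]

lemma relTinv' (b : Bool) (i : Fin 2) :
    rep N ω q u v (.T b true i) * rep N ω q u v (.T b false i) = 1 := by
  simp only [repT, Matrix.diagonal_mul_diagonal, tfun, if_true, if_false, Bool.false_eq_true,
    reduceIte]
  ext p p'
  by_cases h : p = p' <;>
    simp [Matrix.diagonal_apply, Matrix.one_apply, h,
      inv_mul_cancel₀ (klfun_ne hq0 (hω0 hω) hu hv b i p')]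

omit hu hv in
lemma relKE {a : ℂ} (ha : a = q ^ (-2 : ℤ) * ω) (i j : Fin 2) :
    rep N ω q u v (.T false false i) * rep N ω q u v (.E j) =
    qm q a i j • (rep N ω q u v (.E j) * rep N ω q u v (.T false false i)) := by
  have hω' := hω0 hω
  have hp := hpow (hω1 hω)
  have hp' : ∀ t : Fin N, (ω⁻¹) ^ (((t + 1 : Fin N)) : ℕ) = ω⁻¹ ^ (t : ℕ) * ω⁻¹ := by
    intro t; rw [inv_pow, inv_pow, hp, mul_inv]
  have hp1 : ∀ t : Fin N, ω ^ (((1 + t : Fin N)) : ℕ) = ω ^ (t : ℕ) * ω := by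
    intro t; rw [show (1 + t : Fin N) = t + 1 from add_comm 1 t, hp]
  have hp1' : ∀ t : Fin N, (ω⁻¹) ^ (((1 + t : Fin N)) : ℕ) = ω⁻¹ ^ (t : ℕ) * ω⁻¹ := by
    intro t; rw [show (1 + t : Fin N) = t + 1 from add_comm 1 t, hp']
  have hωn : ∀ n : ℕ, ω ^ n ≠ 0 := fun n => pow_ne_zero n hω'
  have hqn : ∀ n : ℕ, q ^ n ≠ 0 := fun n => pow_ne_zero n hq0
  subst ha
  fin_cases i <;> fin_cases j <;> ext ⟨s, t⟩ ⟨s', t'⟩ <;> fin_cases s <;> fin_cases s' <;>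
    simp [Fin.mk_zero, Fin.mk_one, _root_.zpow_neg, zpow_ofNat, tfun, klfun, kfun, lfun, qm, e12, e21,
      Matrix.single, Dmat, Dinv, Cmat, Matrix.kroneckerMap_apply, Matrix.diagonal_mul,
      Matrix.mul_diagonal, Matrix.smul_apply, Matrix.diagonal_apply, smul_eq_mul,
      Matrix.of_apply]
  all_goals try split_ifs with h
  all_goals try subst h
  all_goals try simp only [hp, hp', hp1, hp1', inv_pow, mul_inv, pow_mul]
  any_goals ring
  all_goals (field_simp [hωn, hqn]; try ring)

omit hu hv in
lemma relKF {a : ℂ} (ha : a = q ^ (-2 : ℤ) * ω) (i j : Fin 2) :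
    rep N ω q u v (.T false false i) * rep N ω q u v (.F j) =
    (qm q a i j)⁻¹ • (rep N ω q u v (.F j) * rep N ω q u v (.T false false i)) := by
  have hω' := hω0 hω
  have hp := hpow (hω1 hω)
  have hp' : ∀ t : Fin N, (ω⁻¹) ^ (((t + 1 : Fin N)) : ℕ) = ω⁻¹ ^ (t : ℕ) * ω⁻¹ := by
    intro t; rw [inv_pow, inv_pow, hp, mul_inv]
  have hp1 : ∀ t : Fin N, ω ^ (((1 + t : Fin N)) : ℕ) = ω ^ (t : ℕ) * ω := by
    intro t; rw [show (1 + t : Fin N) = t + 1 from add_comm 1 t, hp]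
  have hp1' : ∀ t : Fin N, (ω⁻¹) ^ (((1 + t : Fin N)) : ℕ) = ω⁻¹ ^ (t : ℕ) * ω⁻¹ := by
    intro t; rw [show (1 + t : Fin N) = t + 1 from add_comm 1 t, hp']
  have hωn : ∀ n : ℕ, ω ^ n ≠ 0 := fun n => pow_ne_zero n hω'
  have hqn : ∀ n : ℕ, q ^ n ≠ 0 := fun n => pow_ne_zero n hq0
  subst ha
  fin_cases i <;> fin_cases j <;> ext ⟨s, t⟩ ⟨s', t'⟩ <;> fin_cases s <;> fin_cases s' <;>
    simp [Fin.mk_zero, Fin.mk_one, _root_.zpow_neg, zpow_ofNat, tfun, klfun, kfun, lfun, qm,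
      e12, e21, Matrix.single, Dmat, Dinv, Cmat, Cinv, Matrix.kroneckerMap_apply,
      Matrix.diagonal_mul, Matrix.mul_diagonal, Matrix.smul_apply, Matrix.diagonal_apply,
      smul_eq_mul, Matrix.of_apply, Matrix.one_apply]
  all_goals try split_ifs with h
  all_goals try subst h
  all_goals try simp only [hp, hp', hp1, hp1', inv_pow, mul_inv, pow_mul]
  any_goals ring
  all_goals (field_simp [hωn, hqn]; try ring)

omit hu hv in
lemma relLE {a : ℂ} (ha : a = q ^ (-2 : ℤ) * ω) (i j : Fin 2) :
    rep N ω q u v (.T true false i) * rep N ω q u v (.E j) =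
    (qm q a j i)⁻¹ • (rep N ω q u v (.E j) * rep N ω q u v (.T true false i)) := by
  have hω' := hω0 hω
  have hp := hpow (hω1 hω)
  have hp' : ∀ t : Fin N, (ω⁻¹) ^ (((t + 1 : Fin N)) : ℕ) = ω⁻¹ ^ (t : ℕ) * ω⁻¹ := by
    intro t; rw [inv_pow, inv_pow, hp, mul_inv]
  have hp1 : ∀ t : Fin N, ω ^ (((1 + t : Fin N)) : ℕ) = ω ^ (t : ℕ) * ω := by
    intro t; rw [show (1 + t : Fin N) = t + 1 from add_comm 1 t, hp]
  have hp1' : ∀ t : Fin N, (ω⁻¹) ^ (((1 + t : Fin N)) : ℕ) = ω⁻¹ ^ (t : ℕ) * ω⁻¹ := by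
    intro t; rw [show (1 + t : Fin N) = t + 1 from add_comm 1 t, hp']
  have hωn : ∀ n : ℕ, ω ^ n ≠ 0 := fun n => pow_ne_zero n hω'
  have hqn : ∀ n : ℕ, q ^ n ≠ 0 := fun n => pow_ne_zero n hq0
  subst ha
  fin_cases i <;> fin_cases j <;> ext ⟨s, t⟩ ⟨s', t'⟩ <;> fin_cases s <;> fin_cases s' <;>
    simp [Fin.mk_zero, Fin.mk_one, _root_.zpow_neg, zpow_ofNat, tfun, klfun, kfun, lfun, qm,
      e12, e21, Matrix.single, Dmat, Dinv, Cmat, Cinv, Matrix.kroneckerMap_apply,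
      Matrix.diagonal_mul, Matrix.mul_diagonal, Matrix.smul_apply, Matrix.diagonal_apply,
      smul_eq_mul, Matrix.of_apply, Matrix.one_apply]
  all_goals try split_ifs with h
  all_goals try subst h
  all_goals try simp only [hp, hp', hp1, hp1', inv_pow, mul_inv, pow_mul]
  any_goals ring
  all_goals (field_simp [hωn, hqn]; try ring)

omit hu hv in
lemma relLF {a : ℂ} (ha : a = q ^ (-2 : ℤ) * ω) (i j : Fin 2) :
    rep N ω q u v (.T true false i) * rep N ω q u v (.F j) =
    qm q a j i • (rep N ω q u v (.F j) * rep N ω q u v (.T true false i)) := by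
  have hω' := hω0 hω
  have hp := hpow (hω1 hω)
  have hp' : ∀ t : Fin N, (ω⁻¹) ^ (((t + 1 : Fin N)) : ℕ) = ω⁻¹ ^ (t : ℕ) * ω⁻¹ := by
    intro t; rw [inv_pow, inv_pow, hp, mul_inv]
  have hp1 : ∀ t : Fin N, ω ^ (((1 + t : Fin N)) : ℕ) = ω ^ (t : ℕ) * ω := by
    intro t; rw [show (1 + t : Fin N) = t + 1 from add_comm 1 t, hp]
  have hp1' : ∀ t : Fin N, (ω⁻¹) ^ (((1 + t : Fin N)) : ℕ) = ω⁻¹ ^ (t : ℕ) * ω⁻¹ := by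
    intro t; rw [show (1 + t : Fin N) = t + 1 from add_comm 1 t, hp']
  have hωn : ∀ n : ℕ, ω ^ n ≠ 0 := fun n => pow_ne_zero n hω'
  have hqn : ∀ n : ℕ, q ^ n ≠ 0 := fun n => pow_ne_zero n hq0
  subst ha
  fin_cases i <;> fin_cases j <;> ext ⟨s, t⟩ ⟨s', t'⟩ <;> fin_cases s <;> fin_cases s' <;>
    simp [Fin.mk_zero, Fin.mk_one, _root_.zpow_neg, zpow_ofNat, tfun, klfun, kfun, lfun, qm,
      e12, e21, Matrix.single, Dmat, Dinv, Cmat, Cinv, Matrix.kroneckerMap_apply,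
      Matrix.diagonal_mul, Matrix.mul_diagonal, Matrix.smul_apply, Matrix.diagonal_apply,
      smul_eq_mul, Matrix.of_apply, Matrix.one_apply]
  all_goals try split_ifs with h
  all_goals try subst h
  all_goals try simp only [hp, hp', hp1, hp1', inv_pow, mul_inv, pow_mul]
  any_goals ring
  all_goals (field_simp [hωn, hqn]; try ring)

omit hω hq0 hu hv in
lemma e12_mul_e21 : e12 * e21 = e11 := by
  rw [e12, e21, Matrix.single_mul_single_same, mul_one]; rfl

omit hω hq0 hu hv in
lemma e21_mul_e12 : e21 * e12 = e22 := by
  rw [e21, e12, Matrix.single_mul_single_same, mul_one]; rfl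

omit hq0 hu hv in
lemma relEF (i j : Fin 2) :
    rep N ω q u v (.E i) * rep N ω q u v (.F j) -
      rep N ω q u v (.F j) * rep N ω q u v (.E i) =
    if i = j then -rep N ω q u v (.T false false i) + rep N ω q u v (.T true false i)
      else 0 := by
  have hω' := hω0 hω
  have hωn : ∀ n : ℕ, ω ^ n ≠ 0 := fun n => pow_ne_zero n hω'
  have hCDC := CDC (hω1 hω) hω'
  fin_cases i <;> fin_cases j
  · -- i = 0, j = 0
    rw [show ((⟨0, by norm_num⟩ : Fin 2) = (0 : Fin 2)) from rfl]
    rw [repE0, repF0, if_pos rfl, smul_mul_assoc, mul_smul_comm,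
      ← Matrix.mul_kronecker_mul, ← Matrix.mul_kronecker_mul, e21_mul_e12, e12_mul_e21,
      DCC, hCDC]
    ext ⟨s, t⟩ ⟨s', t'⟩
    fin_cases s <;> fin_cases s' <;>
      simp [Fin.mk_zero, Fin.mk_one, tfun, klfun, kfun, lfun, e11, e22,
        Matrix.single, Dinv, Matrix.kroneckerMap_apply, Matrix.smul_apply,
        Matrix.diagonal_apply, smul_eq_mul, Matrix.of_apply, Prod.mk.injEq] <;>
      split_ifs with h <;> try ring
  · -- i = 0, j = 1
    rw [show ((⟨0, by norm_num⟩ : Fin 2) = (0 : Fin 2)) from rfl,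
      show ((⟨1, by norm_num⟩ : Fin 2) = (1 : Fin 2)) from rfl]
    rw [repE0, repF1, if_neg (by decide), smul_mul_assoc, mul_smul_comm,
      ← Matrix.mul_kronecker_mul, ← Matrix.mul_kronecker_mul, e21_sq, Matrix.zero_kronecker,
      Matrix.zero_kronecker]
    simp
  · -- i = 1, j = 0
    rw [show ((⟨0, by norm_num⟩ : Fin 2) = (0 : Fin 2)) from rfl,
      show ((⟨1, by norm_num⟩ : Fin 2) = (1 : Fin 2)) from rfl]
    rw [repE1, repF0, if_neg (by decide), smul_mul_assoc, mul_smul_comm,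
      ← Matrix.mul_kronecker_mul, ← Matrix.mul_kronecker_mul, e12_sq, Matrix.zero_kronecker,
      Matrix.zero_kronecker]
    simp
  · -- i = 1, j = 1
    rw [show ((⟨1, by norm_num⟩ : Fin 2) = (1 : Fin 2)) from rfl]
    rw [repE1, repF1, if_pos rfl, smul_mul_assoc, mul_smul_comm,
      ← Matrix.mul_kronecker_mul, ← Matrix.mul_kronecker_mul, e12_mul_e21, e21_mul_e12,
      mul_one, one_mul]
    ext ⟨s, t⟩ ⟨s', t'⟩
    fin_cases s <;> fin_cases s' <;>
      simp [Fin.mk_zero, Fin.mk_one, tfun, klfun, kfun, lfun, e11, e22,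
        Matrix.single, Dmat, Matrix.kroneckerMap_apply, Matrix.smul_apply,
        Matrix.diagonal_apply, smul_eq_mul, Matrix.of_apply, Prod.mk.injEq] <;>
      split_ifs with h <;> try ring

end Rels

lemma diagK1 : u • (dg2 (q ^ 2) 1 ⊗ₖ Dmat N ω) =
    Matrix.diagonal (tfun N ω q u v false false 1) := by
  ext ⟨s, t⟩ ⟨s', t'⟩
  fin_cases s <;> fin_cases s' <;>
    simp [Fin.mk_zero, Fin.mk_one, tfun, klfun, kfun, dg2, Dmat, Matrix.kroneckerMap_apply,
      Matrix.diagonal_apply, Matrix.smul_apply, smul_eq_mul, Prod.mk.injEq,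
      Matrix.of_apply] <;>
    split_ifs <;> try ring

lemma diagL1 : u • (dg2 1 (q ^ 2) ⊗ₖ Dmat N ω) =
    Matrix.diagonal (tfun N ω q u v true false 1) := by
  ext ⟨s, t⟩ ⟨s', t'⟩
  fin_cases s <;> fin_cases s' <;>
    simp [Fin.mk_zero, Fin.mk_one, tfun, klfun, lfun, dg2, Dmat, Matrix.kroneckerMap_apply,
      Matrix.diagonal_apply, Matrix.smul_apply, smul_eq_mul, Prod.mk.injEq,
      Matrix.of_apply] <;>
    split_ifs <;> try ring

lemma diagK0 : v • (dg2 ω (q ^ 2) ⊗ₖ Dinv N ω) =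
    Matrix.diagonal (tfun N ω q u v false false 0) := by
  ext ⟨s, t⟩ ⟨s', t'⟩
  fin_cases s <;> fin_cases s' <;>
    simp [Fin.mk_zero, Fin.mk_one, tfun, klfun, kfun, dg2, Dinv, Matrix.kroneckerMap_apply,
      Matrix.diagonal_apply, Matrix.smul_apply, smul_eq_mul, Prod.mk.injEq,
      Matrix.of_apply] <;>
    split_ifs <;> try ring

lemma diagL0 : v • (dg2 (ω * q ^ 2) 1 ⊗ₖ Dinv N ω) =
    Matrix.diagonal (tfun N ω q u v true false 0) := by
  ext ⟨s, t⟩ ⟨s', t'⟩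
  fin_cases s <;> fin_cases s' <;>
    simp [Fin.mk_zero, Fin.mk_one, tfun, klfun, lfun, dg2, Dinv, Matrix.kroneckerMap_apply,
      Matrix.diagonal_apply, Matrix.smul_apply, smul_eq_mul, Prod.mk.injEq,
      Matrix.of_apply] <;>
    split_ifs <;> try ring


/-- The representation as a map out of the free algebra. -/
def frep (N : ℕ) [NeZero N] (ω q u v : ℂ) :
    FreeAlgebra ℂ Gen →ₐ[ℂ] Matrix (Fin 2 × Fin N) (Fin 2 × Fin N) ℂ :=
  FreeAlgebra.lift ℂ (rep N ω q u v)

@[simp] lemma frep_ι (g : Gen) : frep N ω q u v (FreeAlgebra.ι ℂ g) = rep N ω q u v g :=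
  FreeAlgebra.lift_ι_apply _ _

lemma frep_rel {a : ℂ} (hω : IsPrimitiveRoot ω N) (hq0 : q ≠ 0) (hu : u ≠ 0) (hv : v ≠ 0)
    (ha : a = q ^ (-2 : ℤ) * ω) :
    ∀ ⦃x y⦄, URel q a x y → frep N ω q u v x = frep N ω q u v y := by
  intro x y h
  induction h with
  | torusComm b c b' c' i i' =>
    simp only [_root_.map_mul, frep_ι]; exact relTT b c b' c' i i'
  | torusInv b i =>
    simp only [_root_.map_mul, _root_.map_one, frep_ι]; exact relTinv hω hq0 hu hv b i
  | torusInv' b i =>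
    simp only [_root_.map_mul, _root_.map_one, frep_ι]; exact relTinv' hω hq0 hu hv b i
  | KE i j =>
    simp only [_root_.map_mul, _root_.map_smul, frep_ι]; exact relKE hω hq0 ha i j
  | KF i j =>
    simp only [_root_.map_mul, _root_.map_smul, frep_ι]; exact relKF hω hq0 ha i j
  | LE i j =>
    simp only [_root_.map_mul, _root_.map_smul, frep_ι]; exact relLE hω hq0 ha i j
  | LF i j =>
    simp only [_root_.map_mul, _root_.map_smul, frep_ι]; exact relLF hω hq0 ha i j
  | EF i j =>
    simp only [_root_.map_sub, _root_.map_mul, apply_ite (frep N ω q u v), _root_.map_add, _root_.map_neg, _root_.map_zero,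
      frep_ι]
    exact relEF hω i j
  | serreE i j hij =>
    rw [map_serreElt, _root_.map_zero]
    have : (fun k => frep N ω q u v (FreeAlgebra.ι ℂ (Gen.E k))) =
        fun k => rep N ω q u v (.E k) := by funext k; simp
    rw [this]
    exact serreElt_eq_zero q _ _ i j (repE_sq i)
  | serreF i j hij =>
    rw [map_serreElt, _root_.map_zero]
    have : (fun k => frep N ω q u v (FreeAlgebra.ι ℂ (Gen.F k))) =
        fun k => rep N ω q u v (.F k) := by funext k; simp
    rw [this]
    exact serreElt_eq_zero q _ _ i j (repF_sq i)

end MainProof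

/-- Theorem (well-definedness of the vector representation, Section 6): for `a = q⁻²ω`
with `ω` a primitive `N`-th root of unity, the stated eight matrices satisfy all the
defining relations of `U`, i.e. there is a unique `ℂ`-algebra homomorphism
`ρ : U → M_{2N}(ℂ) = M₂(ℂ)⊗M_N(ℂ)` taking these values on the generators. -/
theorem stmt_16 (N : ℕ) [NeZero N] (ω q a u v : ℂ)
    (hω : IsPrimitiveRoot ω N) (hq0 : q ≠ 0) (hq : ‖q‖ ≠ 1)
    (hu : u ≠ 0) (hv : v ≠ 0) (ha : a = q ^ (-2 : ℤ) * ω) :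
    ∃! ρ : UU q a →ₐ[ℂ] Matrix (Fin 2 × Fin N) (Fin 2 × Fin N) ℂ,
      ρ (Kg q a 1) = u • (dg2 (q ^ 2) 1 ⊗ₖ Dmat N ω) ∧
      ρ (Lg q a 1) = u • (dg2 1 (q ^ 2) ⊗ₖ Dmat N ω) ∧
      ρ (Ef q a 1) = (-(u * (q ^ 2 - 1))) • (e12 ⊗ₖ Dmat N ω) ∧
      ρ (Ff q a 1) = e21 ⊗ₖ (1 : Matrix (Fin N) (Fin N) ℂ) ∧
      ρ (Kg q a 0) = v • (dg2 ω (q ^ 2) ⊗ₖ Dinv N ω) ∧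
      ρ (Lg q a 0) = v • (dg2 (ω * q ^ 2) 1 ⊗ₖ Dinv N ω) ∧
      ρ (Ef q a 0) = (-(v * (q ^ 2 - 1))) • (e21 ⊗ₖ (Dinv N ω * Cmat N)) ∧
      ρ (Ff q a 0) = e12 ⊗ₖ Cinv N := by
  classical
  set ρ : UU q a →ₐ[ℂ] Matrix (Fin 2 × Fin N) (Fin 2 × Fin N) ℂ :=
    RingQuot.liftAlgHom ℂ ⟨frep N ω q u v, frep_rel hω hq0 hu hv ha⟩ with hρdef
  have hρ : ∀ g : Gen, ρ (gen q a g) = rep N ω q u v g := fun g => by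
    rw [hρdef, gen, RingQuot.liftAlgHom_mkAlgHom_apply, frep_ι]
  refine ⟨ρ, ⟨?_, ?_, ?_, ?_, ?_, ?_, ?_, ?_⟩, ?_⟩
  · rw [Kg, hρ, repT, ← diagK1]
  · rw [Lg, hρ, repT, ← diagL1]
  · rw [Ef, hρ, repE1]
  · rw [Ff, hρ, repF1]
  · rw [Kg, hρ, repT, ← diagK0]
  · rw [Lg, hρ, repT, ← diagL0]
  · rw [Ef, hρ, repE0]
  · rw [Ff, hρ, repF0]
  · rintro ρ' ⟨hK1, hL1, hE1, hF1, hK0, hL0, hE0, hF0⟩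
    have hT : ∀ (b : Bool) (i : Fin 2),
        ρ' (gen q a (Gen.T b false i)) = ρ (gen q a (Gen.T b false i)) := by
      intro b i
      fin_cases b <;> fin_cases i
      · show ρ' (Lg q a 0) = ρ (Lg q a 0)
        rw [hL0, Lg, hρ, repT, diagL0]
      · show ρ' (Lg q a 1) = ρ (Lg q a 1)
        rw [hL1, Lg, hρ, repT, diagL1]
      · show ρ' (Kg q a 0) = ρ (Kg q a 0)
        rw [hK0, Kg, hρ, repT, diagK0]
      · show ρ' (Kg q a 1) = ρ (Kg q a 1)
        rw [hK1, Kg, hρ, repT, diagK1]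
    have key : ∀ g : Gen, ρ' (gen q a g) = ρ (gen q a g) := by
      intro g
      cases g with
      | T b c i =>
        cases c with
        | false => exact hT b i
        | true =>
          have h1 : gen q a (Gen.T b false i) * gen q a (Gen.T b true i) = 1 := by
            simpa only [gen, _root_.map_mul, _root_.map_one] using
              RingQuot.mkAlgHom_rel ℂ (URel.torusInv (q := q) (a := a) b i)
          have h2 : gen q a (Gen.T b true i) * gen q a (Gen.T b false i) = 1 := by
            simpa only [gen, _root_.map_mul, _root_.map_one] using
              RingQuot.mkAlgHom_rel ℂ (URel.torusInv' (q := q) (a := a) b i)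
          have e2 : ρ' (gen q a (Gen.T b true i)) * ρ (gen q a (Gen.T b false i)) = 1 := by
            rw [← hT b i, ← _root_.map_mul, h2, _root_.map_one]
          have e1 : ρ (gen q a (Gen.T b false i)) * ρ (gen q a (Gen.T b true i)) = 1 := by
            rw [← _root_.map_mul, h1, _root_.map_one]
          exact left_inv_eq_right_inv e2 e1
      | E i =>
        fin_cases i
        · show ρ' (Ef q a 0) = ρ (Ef q a 0)
          rw [hE0, Ef, hρ, repE0]
        · show ρ' (Ef q a 1) = ρ (Ef q a 1)
          rw [hE1, Ef, hρ, repE1]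
      | F i =>
        fin_cases i
        · show ρ' (Ff q a 0) = ρ (Ff q a 0)
          rw [hF0, Ff, hρ, repF0]
        · show ρ' (Ff q a 1) = ρ (Ff q a 1)
          rw [hF1, Ff, hρ, repF1]
    apply RingQuot.ringQuot_ext'
    apply FreeAlgebra.hom_ext
    funext g
    exact key g

end TwoParamQA
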